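/- Let M ⊂ ℝ⁴ be parametrized by x(u,v) = α(u) + β(v) where α(u) = (α₁(u), α₂(u), 0, 0) and β(v) = (0, 0, β₁(v), β₂(v)) are unit-speed plane curves with nonvanishing curvatures κ_α(u) and κ_β(v), Frenet normals n_α(u) and n_β(v). Define x̃(u,v) = x(u,v) + (1/κ_α(u))·n_α(u) + (1/κ_β(v))·n_β(v). Then x̃_u = (1/κ_α)'·n_α and x̃_v = (1/κ_β)'·n_β, and consequently ⟨x̃_u, x_u⟩ = ⟨x̃_u, x_v⟩ = ⟨x̃_v, x_u⟩ = ⟨x̃_v, x_v⟩ = 0. -/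

import Mathlib

lemma pi4_hasDerivAt {f1 f2 f3 f4 : ℝ → ℝ} {d : Fin 4 → ℝ} {x : ℝ}
    (h1 : HasDerivAt f1 (d 0) x) (h2 : HasDerivAt f2 (d 1) x)
    (h3 : HasDerivAt f3 (d 2) x) (h4 : HasDerivAt f4 (d 3) x) :
    HasDerivAt (fun t => ![f1 t, f2 t, f3 t, f4 t]) d x := by
  rw [hasDerivAt_pi]
  intro i
  fin_cases i <;> simpa

/-- The evolute-built normal transport surface of a translation surface in ℝ⁴
has tangent planes orthogonal to those of the original surface (Example 2). -/
theorem stmt_12 (α₁ α₂ β₁ β₂ tα1 tα2 nα1 nα2 tβ1 tβ2 nβ1 nβ2 κα κβ : ℝ → ℝ)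
    -- unit-speed curves with tangents tα, tβ
    (hα₁ : ∀ u, HasDerivAt α₁ (tα1 u) u) (hα₂ : ∀ u, HasDerivAt α₂ (tα2 u) u)
    (hβ₁ : ∀ v, HasDerivAt β₁ (tβ1 v) v) (hβ₂ : ∀ v, HasDerivAt β₂ (tβ2 v) v)
    (hαunit : ∀ u, tα1 u ^ 2 + tα2 u ^ 2 = 1)
    (hβunit : ∀ v, tβ1 v ^ 2 + tβ2 v ^ 2 = 1)
    -- nonvanishing curvatures, differentiable
    (hκα : ∀ u, κα u ≠ 0) (hκβ : ∀ v, κβ v ≠ 0)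
    (hκαd : Differentiable ℝ κα) (hκβd : Differentiable ℝ κβ)
    -- Frenet equations t' = κ n, n' = −κ t
    (htα1 : ∀ u, HasDerivAt tα1 (κα u * nα1 u) u)
    (htα2 : ∀ u, HasDerivAt tα2 (κα u * nα2 u) u)
    (hnα1 : ∀ u, HasDerivAt nα1 (-(κα u * tα1 u)) u)
    (hnα2 : ∀ u, HasDerivAt nα2 (-(κα u * tα2 u)) u)
    (htβ1 : ∀ v, HasDerivAt tβ1 (κβ v * nβ1 v) v)
    (htβ2 : ∀ v, HasDerivAt tβ2 (κβ v * nβ2 v) v)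
    (hnβ1 : ∀ v, HasDerivAt nβ1 (-(κβ v * tβ1 v)) v)
    (hnβ2 : ∀ v, HasDerivAt nβ2 (-(κβ v * tβ2 v)) v)
    -- Frenet frames are orthonormal
    (hαorth : ∀ u, tα1 u * nα1 u + tα2 u * nα2 u = 0)
    (hβorth : ∀ v, tβ1 v * nβ1 v + tβ2 v * nβ2 v = 0)
    -- the translation surface and its normal transport surface
    (x xt : ℝ → ℝ → Fin 4 → ℝ)
    (hx : ∀ u v, x u v = ![α₁ u, α₂ u, β₁ v, β₂ v])
    (hxt : ∀ u v, xt u v =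
      ![α₁ u + (κα u)⁻¹ * nα1 u, α₂ u + (κα u)⁻¹ * nα2 u,
        β₁ v + (κβ v)⁻¹ * nβ1 v, β₂ v + (κβ v)⁻¹ * nβ2 v]) :
    ∀ u v,
      deriv (fun u' => xt u' v) u =
        deriv (fun u' => (κα u')⁻¹) u • ![nα1 u, nα2 u, 0, 0] ∧
      deriv (fun v' => xt u v') v =
        deriv (fun v' => (κβ v')⁻¹) v • ![0, 0, nβ1 v, nβ2 v] ∧
      (∑ i : Fin 4, deriv (fun u' => xt u' v) u i * deriv (fun u' => x u' v) u i) = 0 ∧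
      (∑ i : Fin 4, deriv (fun u' => xt u' v) u i * deriv (fun v' => x u v') v i) = 0 ∧
      (∑ i : Fin 4, deriv (fun v' => xt u v') v i * deriv (fun u' => x u' v) u i) = 0 ∧
      (∑ i : Fin 4, deriv (fun v' => xt u v') v i * deriv (fun v' => x u v') v i) = 0 := by
  intro u v
  set cα := deriv (fun u' => (κα u')⁻¹) u with hcα
  set cβ := deriv (fun v' => (κβ v')⁻¹) v with hcβ
  have hiα : HasDerivAt (fun u' => (κα u')⁻¹) cα u := by
    rw [hcα]
    exact (((hκαd u).hasDerivAt.inv (hκα u))).deriv ▸ ((hκαd u).hasDerivAt.inv (hκα u))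
  have hiβ : HasDerivAt (fun v' => (κβ v')⁻¹) cβ v := by
    rw [hcβ]
    exact (((hκβd v).hasDerivAt.inv (hκβ v))).deriv ▸ ((hκβd v).hasDerivAt.inv (hκβ v))
  -- derivative of xt in u
  have hA1 : HasDerivAt (fun u' => α₁ u' + (κα u')⁻¹ * nα1 u') (cα * nα1 u) u := by
    have := (hα₁ u).add (hiα.mul (hnα1 u))
    refine this.congr_deriv ?_
    have hc : (κα u)⁻¹ * κα u = 1 := inv_mul_cancel₀ (hκα u)
    rw [show ∀ a : ℝ, (κα u)⁻¹ * -(κα u * a) = -((κα u)⁻¹ * κα u * a) from fun a => by ring]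
    rw [hc]
    ring
  have hA2 : HasDerivAt (fun u' => α₂ u' + (κα u')⁻¹ * nα2 u') (cα * nα2 u) u := by
    have := (hα₂ u).add (hiα.mul (hnα2 u))
    refine this.congr_deriv ?_
    have hc : (κα u)⁻¹ * κα u = 1 := inv_mul_cancel₀ (hκα u)
    rw [show ∀ a : ℝ, (κα u)⁻¹ * -(κα u * a) = -((κα u)⁻¹ * κα u * a) from fun a => by ring]
    rw [hc]
    ring
  have hB1 : HasDerivAt (fun v' => β₁ v' + (κβ v')⁻¹ * nβ1 v') (cβ * nβ1 v) v := by
    have := (hβ₁ v).add (hiβ.mul (hnβ1 v))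
    refine this.congr_deriv ?_
    have hc : (κβ v)⁻¹ * κβ v = 1 := inv_mul_cancel₀ (hκβ v)
    rw [show ∀ a : ℝ, (κβ v)⁻¹ * -(κβ v * a) = -((κβ v)⁻¹ * κβ v * a) from fun a => by ring]
    rw [hc]
    ring
  have hB2 : HasDerivAt (fun v' => β₂ v' + (κβ v')⁻¹ * nβ2 v') (cβ * nβ2 v) v := by
    have := (hβ₂ v).add (hiβ.mul (hnβ2 v))
    refine this.congr_deriv ?_
    have hc : (κβ v)⁻¹ * κβ v = 1 := inv_mul_cancel₀ (hκβ v)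
    rw [show ∀ a : ℝ, (κβ v)⁻¹ * -(κβ v * a) = -((κβ v)⁻¹ * κβ v * a) from fun a => by ring]
    rw [hc]
    ring
  have hxtu : HasDerivAt (fun u' => xt u' v) (cα • ![nα1 u, nα2 u, 0, 0]) u := by
    have : (fun u' => xt u' v) = fun u' =>
        ![α₁ u' + (κα u')⁻¹ * nα1 u', α₂ u' + (κα u')⁻¹ * nα2 u',
          β₁ v + (κβ v)⁻¹ * nβ1 v, β₂ v + (κβ v)⁻¹ * nβ2 v] := by
      funext u'; exact hxt u' v
    rw [this]
    refine pi4_hasDerivAt ?_ ?_ ?_ ?_ <;> simp <;>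
      first
        | exact hA1
        | exact hA2
        | exact hasDerivAt_const _ _
  have hxtv : HasDerivAt (fun v' => xt u v') (cβ • ![0, 0, nβ1 v, nβ2 v]) v := by
    have : (fun v' => xt u v') = fun v' =>
        ![α₁ u + (κα u)⁻¹ * nα1 u, α₂ u + (κα u)⁻¹ * nα2 u,
          β₁ v' + (κβ v')⁻¹ * nβ1 v', β₂ v' + (κβ v')⁻¹ * nβ2 v'] := by
      funext v'; exact hxt u v'
    rw [this]
    refine pi4_hasDerivAt ?_ ?_ ?_ ?_ <;> simp <;>
      first
        | exact hB1
        | exact hB2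
        | exact hasDerivAt_const _ _
  have hxu : HasDerivAt (fun u' => x u' v) (![tα1 u, tα2 u, 0, 0]) u := by
    have : (fun u' => x u' v) = fun u' => ![α₁ u', α₂ u', β₁ v, β₂ v] := by
      funext u'; exact hx u' v
    rw [this]
    refine pi4_hasDerivAt ?_ ?_ ?_ ?_ <;> simp <;>
      first
        | exact hα₁ u
        | exact hα₂ u
        | exact hasDerivAt_const _ _
  have hxv : HasDerivAt (fun v' => x u v') (![0, 0, tβ1 v, tβ2 v]) v := by
    have : (fun v' => x u v') = fun v' => ![α₁ u, α₂ u, β₁ v', β₂ v'] := by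
      funext v'; exact hx u v'
    rw [this]
    refine pi4_hasDerivAt ?_ ?_ ?_ ?_ <;> simp <;>
      first
        | exact hβ₁ v
        | exact hβ₂ v
        | exact hasDerivAt_const _ _
  have e1 := hxtu.deriv
  have e2 := hxtv.deriv
  have e3 := hxu.deriv
  have e4 := hxv.deriv
  refine ⟨e1, e2, ?_, ?_, ?_, ?_⟩ <;>
    simp [e1, e2, e3, e4, Fin.sum_univ_four] <;> ring_nf
  · calc cα * nα1 u * tα1 u + cα * nα2 u * tα2 u
        = cα * (tα1 u * nα1 u + tα2 u * nα2 u) := by ring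
      _ = 0 := by rw [hαorth u]; ring
  · calc cβ * nβ1 v * tβ1 v + cβ * nβ2 v * tβ2 v
        = cβ * (tβ1 v * nβ1 v + tβ2 v * nβ2 v) := by ring
      _ = 0 := by rw [hβorth v]; ring
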